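/- arXiv:2101.11965 — 16 statements merged into one kernel-verified Lean document; each statement's English description precedes it below -/
import Mathlib

section
/- Every conservative choice function f on a poset P satisfies path independence: for all ideals X and Y, f(X ∪ Y) = f(f(X) ∪ f(Y)). -/
/-- A choice function on the ideals of a poset: `f X` is an ideal contained in `X`. -/
def IsCF {P : Type*} [PartialOrder P] (f : Set P → Set P) : Prop :=
  ∀ X : Set P, IsLowerSet X → f X ⊆ X ∧ IsLowerSet (f X)

/-- Heredity: if `A ⊆ B` then `f B ∩ A ⊆ f A` (for ideals `A`, `B`). -/
def Heredity {P : Type*} [PartialOrder P] (f : Set P → Set P) : Prop :=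
  ∀ A B : Set P, IsLowerSet A → IsLowerSet B → A ⊆ B → f B ∩ A ⊆ f A

/-- Outcast: if `f B ⊆ A ⊆ B` then `f A = f B` (for ideals `A`, `B`). -/
def Outcast {P : Type*} [PartialOrder P] (f : Set P → Set P) : Prop :=
  ∀ A B : Set P, IsLowerSet A → IsLowerSet B → f B ⊆ A → A ⊆ B → f A = f B

/-- Every conservative choice function satisfies path independence. -/
theorem conservative_pathIndependent {P : Type*} [PartialOrder P] (f : Set P → Set P)
    (hcf : IsCF f) (hh : Heredity f) (ho : Outcast f) :
    ∀ X Y : Set P, IsLowerSet X → IsLowerSet Y → f (X ∪ Y) = f (f X ∪ f Y) := by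
  intro X Y hX hY
  have hXY : IsLowerSet (X ∪ Y) := hX.union hY
  have hfX := hcf X hX
  have hfY := hcf Y hY
  have hA : IsLowerSet (f X ∪ f Y) := hfX.2.union hfY.2
  have hsub : f (X ∪ Y) ⊆ f X ∪ f Y := by
    intro x hx
    rcases (hcf (X ∪ Y) hXY).1 hx with h | h
    · exact Or.inl (hh X (X ∪ Y) hX hXY Set.subset_union_left ⟨hx, h⟩)
    · exact Or.inr (hh Y (X ∪ Y) hY hXY Set.subset_union_right ⟨hx, h⟩)
  exact (ho (f X ∪ f Y) (X ∪ Y) hA hXY hsub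
    (Set.union_subset (hfX.1.trans Set.subset_union_left)
      (hfY.1.trans Set.subset_union_right))).symm
end

section
/- Every conservative choice function f on a poset P satisfies infinite path independence: for any family (X_i)_{i∈I} of ideals, f(⋃_i X_i) = f(⋃_i f(X_i)). -/
/-- Every conservative choice function satisfies infinite path independence. -/
theorem conservative_infinite_pathIndependent {P : Type*} [PartialOrder P]
    (f : Set P → Set P) (hcf : IsCF f) (hh : Heredity f) (ho : Outcast f)
    {ι : Type*} (Xs : ι → Set P) (hXs : ∀ i, IsLowerSet (Xs i)) :
    f (⋃ i, Xs i) = f (⋃ i, f (Xs i)) := by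
  set B := ⋃ i, Xs i with hB
  set A := ⋃ i, f (Xs i) with hA
  have hBl : IsLowerSet B := isLowerSet_iUnion fun i => hXs i
  have hAl : IsLowerSet A := isLowerSet_iUnion fun i => (hcf _ (hXs i)).2
  have hAB : A ⊆ B := Set.iUnion_mono fun i => (hcf _ (hXs i)).1
  have hfBA : f B ⊆ A := by
    intro x hx
    obtain ⟨i, hi⟩ := Set.mem_iUnion.mp ((hcf B hBl).1 hx)
    exact Set.mem_iUnion.mpr ⟨i, hh (Xs i) B (hXs i) hBl (Set.subset_iUnion _ i) ⟨hx, hi⟩⟩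
  exact (ho A B hAl hBl hfBA hAB).symm
end

section
/- The pointwise union of an arbitrary family of conservative choice functions on a poset P is a conservative choice function. That is, if each f_i is conservative, then f defined by f(X) = ⋃_i f_i(X) is conservative. -/
/-- The pointwise union of an arbitrary family of conservative choice functions
is a conservative choice function. -/
theorem union_conservative {P : Type*} [PartialOrder P] {ι : Type*}
    (F : ι → (Set P → Set P))
    (hcf : ∀ i, IsCF (F i)) (hh : ∀ i, Heredity (F i)) (ho : ∀ i, Outcast (F i)) :
    IsCF (fun X => ⋃ i, F i X) ∧ Heredity (fun X => ⋃ i, F i X) ∧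
      Outcast (fun X => ⋃ i, F i X) := by
  refine ⟨fun X hX => ⟨?_, ?_⟩, fun A B hA hB hAB => ?_, fun A B hA hB h1 h2 => ?_⟩
  · exact Set.iUnion_subset fun i => (hcf i X hX).1
  · exact isLowerSet_iUnion fun i => (hcf i X hX).2
  · rintro x ⟨hx, hxA⟩
    simp only [Set.mem_iUnion] at hx ⊢
    obtain ⟨i, hi⟩ := hx
    exact ⟨i, hh i A B hA hB hAB ⟨hi, hxA⟩⟩
  · have : ∀ i, F i A = F i B := fun i =>
      ho i A B hA hB ((Set.subset_iUnion (fun j => F j B) i).trans h1) h2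
    simp only [this]
end

section
/- A choice function f on a poset is conservative (satisfies heredity and outcast) if and only if it satisfies the single condition: for all ideals A, B, if f(A) ⊆ B then f(B) ∩ A ⊆ f(A). -/
/-- A choice function is conservative iff it satisfies the single condition:
if `f A ⊆ B` then `f B ∩ A ⊆ f A`. -/
theorem conservative_iff_single {P : Type*} [PartialOrder P] (f : Set P → Set P)
    (hcf : IsCF f) :
    (Heredity f ∧ Outcast f) ↔
      (∀ A B : Set P, IsLowerSet A → IsLowerSet B → f A ⊆ B → f B ∩ A ⊆ f A) := by
  constructor
  · rintro ⟨hher, hout⟩ A B hA hB hAB x ⟨hxB, hxA⟩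
    set C := A ∩ B with hC
    have hCl : IsLowerSet C := hA.inter hB
    have hfAC : f A ⊆ C := fun y hy => ⟨(hcf A hA).1 hy, hAB hy⟩
    have hfeq : f C = f A := hout C A hCl hA hfAC Set.inter_subset_left
    have : x ∈ f B ∩ C := ⟨hxB, hxA, (hcf B hB).1 hxB⟩
    have := hher C B hCl hB Set.inter_subset_right this
    rwa [hfeq] at this
  · intro h
    constructor
    · intro A B hA hB hAB
      exact h A B hA hB ((hcf A hA).1.trans hAB)
    · intro A B hA hB hfBA hAB
      apply Set.Subset.antisymm
      · intro x hx
        exact h B A hB hA hfBA ⟨hx, hAB ((hcf A hA).1 hx)⟩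
      · intro x hx
        exact h A B hA hB ((hcf A hA).1.trans hAB) ⟨hx, hfBA hx⟩
end

section
/- If P is a linearly ordered set (chain), then every conservative choice function f on P is of the form f(X) = I ∩ X for the ideal I = f(P). In particular every conservative CF on a chain is a constant choice function. -/
/-- On a chain, every conservative choice function is constant: `f X = f P ∩ X`. -/
theorem chain_conservative_constant {P : Type*} [LinearOrder P] (f : Set P → Set P)
    (hcf : IsCF f) (hh : Heredity f) (ho : Outcast f) :
    ∀ X : Set P, IsLowerSet X → f X = f Set.univ ∩ X := by
  intro X hX
  have huniv : IsLowerSet (Set.univ : Set P) := fun _ _ _ h => trivial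
  by_cases hIX : f Set.univ ⊆ X
  · -- outcast: f X = f univ, and f X ⊆ X
    have := ho X Set.univ hX huniv hIX (Set.subset_univ X)
    rw [this]
    exact (Set.inter_eq_left.mpr (this ▸ (hcf X hX).1)).symm
  · -- then X ⊆ f univ, so f X = X = f univ ∩ X
    obtain ⟨a, haI, haX⟩ := Set.not_subset.mp hIX
    have hXI : X ⊆ f Set.univ := by
      intro x hx
      rcases le_total a x with h | h
      · exact absurd (hX h hx) haX
      · exact (hcf Set.univ huniv).2 h haI
    have h1 : f Set.univ ∩ X ⊆ f X := hh X Set.univ hX huniv (Set.subset_univ X)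
    have h2 : f X ⊆ f Set.univ ∩ X := fun x hx =>
      ⟨hXI ((hcf X hX).1 hx), (hcf X hX).1 hx⟩
    exact Set.Subset.antisymm h2 h1
end

section
/- For any finite sequence A = (a_1, ..., a_k) of elements of a poset P, the elementary choice function f_A is conservative (satisfies heredity and outcast). -/
/-- The elementary choice function associated with a finite sequence (list) `A`:
`elemCF A X = X ∩ I(a_1,…,a_i)` where `i` is the least index with `a_i ∈ X`
(`i = k` if no member of `A` lies in `X`). -/
def elemCF {P : Type*} [PartialOrder P] : List P → Set P → Set P
  | [], _ => ∅
  | a :: as, X => (X ∩ {y | y ≤ a}) ∪ {y | a ∉ X ∧ y ∈ elemCF as X}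

/-- The sequence `A` is compatible with `f`: `a_i ∈ f (P − F(a_1,…,a_{i-1}))` for each `i`,
where `F(S)` is the filter generated by `S`. -/
def Compatible {P : Type*} [PartialOrder P] (f : Set P → Set P) (A : List P) : Prop :=
  ∀ i : Fin A.length, A.get i ∈ f {x | ∀ j : Fin A.length, j.1 < i.1 → ¬ A.get j ≤ x}

/-- An antichain sequence: pairwise incomparable terms. -/
def IsAntichainSeq {P : Type*} [PartialOrder P] (A : List P) : Prop :=
  A.Pairwise fun a b => ¬ a ≤ b ∧ ¬ b ≤ a


lemma elemCF_hered {P : Type*} [PartialOrder P] (L : List P) {A B : Set P}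
    (hAB : A ⊆ B) : elemCF L B ∩ A ⊆ elemCF L A := by
  induction L with
  | nil => simp [elemCF]
  | cons a as ih =>
    rintro x ⟨hx, hxA⟩
    rcases hx with ⟨hxB, hxa⟩ | ⟨haB, hx⟩
    · exact Or.inl ⟨hxA, hxa⟩
    · exact Or.inr ⟨fun h => haB (hAB h), ih ⟨hx, hxA⟩⟩

lemma elemCF_outcast {P : Type*} [PartialOrder P] (L : List P) {A B : Set P}
    (h1 : elemCF L B ⊆ A) (h2 : A ⊆ B) : elemCF L A = elemCF L B := by
  induction L with
  | nil => simp [elemCF]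
  | cons a as ih =>
    by_cases haB : a ∈ B
    · have haA : a ∈ A := h1 (Or.inl ⟨haB, le_refl a⟩)
      have hAB : A ∩ {y | y ≤ a} = B ∩ {y | y ≤ a} := by
        apply Set.Subset.antisymm
        · exact fun x ⟨hx, hxa⟩ => ⟨h2 hx, hxa⟩
        · exact fun x hx => ⟨h1 (Or.inl hx), hx.2⟩
      show (A ∩ {y | y ≤ a}) ∪ _ = (B ∩ {y | y ≤ a}) ∪ _
      rw [hAB]
      congr 1
      ext x
      simp [haA, haB]
    · have haA : a ∉ A := fun h => haB (h2 h)
      have h1' : elemCF as B ⊆ A := fun x hx => h1 (Or.inr ⟨haB, hx⟩)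
      have hAB : A ∩ {y | y ≤ a} = B ∩ {y | y ≤ a} := by
        apply Set.Subset.antisymm
        · exact fun x ⟨hx, hxa⟩ => ⟨h2 hx, hxa⟩
        · exact fun x hx => ⟨h1 (Or.inl hx), hx.2⟩
      show (A ∩ {y | y ≤ a}) ∪ _ = (B ∩ {y | y ≤ a}) ∪ _
      rw [hAB]
      congr 1
      ext x
      simp [haA, haB, ih h1']

/-- The elementary choice function of any finite sequence is conservative. -/
theorem elemCF_conservative {P : Type*} [PartialOrder P] (A : List P) :
    Heredity (elemCF A) ∧ Outcast (elemCF A) := by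
  refine ⟨fun A B _ _ hAB => elemCF_hered _ hAB,
    fun X Y _ _ h1 h2 => elemCF_outcast _ h1 h2⟩
end

section
/- If a finite sequence A = (a_1,...,a_k) in a poset P is compatible with a hereditary choice function f (meaning a_i ∈ f(P − F(a_1,...,a_{i−1})) for each i), then f_A(X) ⊆ f(X) for every ideal X. -/
lemma elemCF_spec {P : Type*} [PartialOrder P] (A : List P) (X : Set P) (y : P)
    (hy : y ∈ elemCF A X) :
    ∃ j : Fin A.length, y ∈ X ∧ y ≤ A.get j ∧
      ∀ j' : Fin A.length, j'.1 < j.1 → A.get j' ∉ X := by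
  induction A with
  | nil => exact absurd hy (Set.notMem_empty y)
  | cons a as ih =>
    rcases hy with ⟨hyX, hya⟩ | ⟨haX, hy⟩
    · exact ⟨⟨0, Nat.succ_pos _⟩, hyX, hya, fun j' hj' => absurd hj' (Nat.not_lt_zero _)⟩
    · obtain ⟨j, hyX, hle, hmin⟩ := ih hy
      refine ⟨⟨j.1 + 1, Nat.succ_lt_succ j.2⟩, hyX, hle, ?_⟩
      rintro ⟨j', hj'⟩ hlt
      cases j' with
      | zero => exact haX
      | succ n => exact hmin ⟨n, Nat.lt_of_succ_lt_succ hj'⟩ (Nat.lt_of_succ_lt_succ hlt)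

/-- If a finite sequence `A` is compatible with a hereditary choice function `f`,
then `f_A ⊆ f`. -/
theorem compatible_elemCF_subset {P : Type*} [PartialOrder P] (f : Set P → Set P)
    (hcf : IsCF f) (hh : Heredity f) (A : List P) (hA : Compatible f A) :
    ∀ X : Set P, IsLowerSet X → elemCF A X ⊆ f X := by
  intro X hX y hy
  obtain ⟨j, hyX, hle, hmin⟩ := elemCF_spec A X y hy
  set B : Set P := {x | ∀ j' : Fin A.length, j'.1 < j.1 → ¬ A.get j' ≤ x} with hB
  have hBlow : IsLowerSet B := by
    intro u v huv hu j' hj' hle'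
    exact hu j' hj' (hle'.trans huv)
  have hXB : X ⊆ B := by
    intro x hx j' hj' hle'
    exact hmin j' hj' (hX hle' hx)
  have hfB := hA j
  have hyfB : y ∈ f B := (hcf B hBlow).2 hle hfB
  exact hh X B hX hBlow hXB ⟨hyfB, hyX⟩
end

section
/- Let f be a choice function on a finite poset P satisfying the outcast condition, and suppose x ∈ f(X) for some ideal X. Then there exists a finite sequence A = (a_1,...,a_k) of pairwise incomparable elements of P, compatible with f, such that x ∈ f_A(X). -/
/-- Relative compatibility: each element of the list is chosen by `f` from the current set. -/
def RC {P : Type*} [PartialOrder P] (f : Set P → Set P) : Set P → List P → Prop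
  | _, [] => True
  | Y, a :: l => a ∈ f Y ∧ RC f (Y ∩ {y | ¬ a ≤ y}) l

lemma rc_get {P : Type*} [PartialOrder P] (f : Set P → Set P) :
    ∀ (L : List P) (Y : Set P), RC f Y L → ∀ (i : ℕ) (h : i < L.length),
      L.get ⟨i, h⟩ ∈ f {y | y ∈ Y ∧ ∀ j, ∀ hj : j < i, ¬ L.get ⟨j, Nat.lt_trans hj h⟩ ≤ y}
  | [], _, _, i, h => absurd h (by simp)
  | a :: l, Y, ⟨ha, hrc⟩, 0, h => by
      have hs : {y | y ∈ Y ∧ ∀ j, ∀ hj : j < 0,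
          ¬ (a :: l).get ⟨j, Nat.lt_trans hj h⟩ ≤ y} = Y := by
        ext y; simp
      rw [hs]; exact ha
  | a :: l, Y, ⟨ha, hrc⟩, i + 1, h => by
      have ih := rc_get f l (Y ∩ {y | ¬ a ≤ y}) hrc i (Nat.lt_of_succ_lt_succ h)
      have hs : {y | y ∈ Y ∩ {y | ¬ a ≤ y} ∧ ∀ j, ∀ hj : j < i,
            ¬ l.get ⟨j, Nat.lt_trans hj (Nat.lt_of_succ_lt_succ h)⟩ ≤ y} =
          {y | y ∈ Y ∧ ∀ j, ∀ hj : j < i + 1, ¬ (a :: l).get ⟨j, Nat.lt_trans hj h⟩ ≤ y} := by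
        ext y
        constructor
        · rintro ⟨⟨hY, hA⟩, hrest⟩
          refine ⟨hY, fun j hj => ?_⟩
          match j with
          | 0 => exact hA
          | j + 1 => exact hrest j (Nat.lt_of_succ_lt_succ hj)
        · rintro ⟨hY, hrest⟩
          exact ⟨⟨hY, hrest 0 (Nat.succ_pos i)⟩,
            fun j hj => hrest (j + 1) (Nat.succ_lt_succ hj)⟩
      rw [hs] at ih
      exact ih

lemma aux_exists {P : Type*} [PartialOrder P] [Fintype P]
    (f : Set P → Set P) (hcf : IsCF f) (ho : Outcast f)
    (X : Set P) (hX : IsLowerSet X) (x : P) (hx : x ∈ f X) :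
    ∀ n : ℕ, ∀ Y : Set P, Y.ncard ≤ n → IsLowerSet Y → X ⊆ Y →
      ∃ L : List P, RC f Y L ∧ IsAntichainSeq L ∧ x ∈ elemCF L X ∧
        (∀ b ∈ L, b ∈ Y) ∧ (∀ b ∈ L, b ∈ X → b = x) := by
  intro n
  induction n with
  | zero =>
      intro Y hc hY hXY
      exfalso
      have hxY : x ∈ Y := hXY ((hcf X hX).1 hx)
      have hpos : 0 < Y.ncard := (Set.ncard_pos (Set.toFinite Y)).mpr ⟨x, hxY⟩
      omega
  | succ n ih =>
      intro Y hc hY hXY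
      by_cases hxy : x ∈ f Y
      · refine ⟨[x], ⟨hxy, trivial⟩, ?_, ?_, ?_, ?_⟩
        · simp [IsAntichainSeq]
        · exact Or.inl ⟨(hcf X hX).1 hx, le_refl x⟩
        · intro b hb
          simp only [List.mem_singleton] at hb
          subst hb
          exact (hcf Y hY).1 hxy
        · intro b hb _
          simpa using hb
      · have hns : (f Y \ X).Nonempty := by
          by_contra hcon
          rw [Set.not_nonempty_iff_eq_empty, Set.diff_eq_empty] at hcon
          exact hxy ((ho X Y hX hY hcon hXY) ▸ hx)
        obtain ⟨a, haS, hmin⟩ :=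
          show ∃ a ∈ f Y \ X, ∀ a' ∈ f Y \ X, id a' ≤ id a → id a = id a' from by
            obtain ⟨a, ha, hm⟩ := (Set.toFinite (f Y \ X)).exists_minimal hns
            exact ⟨a, ha, fun b hb hba => le_antisymm (hm hb hba) hba⟩
        have haY : a ∈ Y := (hcf Y hY).1 haS.1
        have hY' : IsLowerSet (Y ∩ {y | ¬ a ≤ y}) := by
          intro u v hvu hu
          exact ⟨hY hvu hu.1, fun h => hu.2 (h.trans hvu)⟩
        have hXY' : X ⊆ Y ∩ {y | ¬ a ≤ y} := by
          intro y hy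
          exact ⟨hXY hy, fun h => haS.2 (hX h hy)⟩
        have hss : Y ∩ {y | ¬ a ≤ y} ⊂ Y :=
          ⟨Set.inter_subset_left, fun h => (h haY).2 (le_refl a)⟩
        have hcard : (Y ∩ {y | ¬ a ≤ y}).ncard ≤ n := by
          have := Set.ncard_lt_ncard hss (Set.toFinite Y)
          omega
        obtain ⟨L, hrc, hanti, helem, hmemY, hmemX⟩ :=
          ih (Y ∩ {y | ¬ a ≤ y}) hcard hY' hXY'
        refine ⟨a :: L, ⟨haS.1, hrc⟩, ?_, Or.inr ⟨haS.2, helem⟩, ?_, ?_⟩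
        · refine List.Pairwise.cons (fun b hb => ?_) hanti
          have hbY' := hmemY b hb
          constructor
          · exact hbY'.2
          · intro hba
            have hbfY : b ∈ f Y := (hcf Y hY).2 hba haS.1
            by_cases hbX : b ∈ X
            · have hbx : b = x := hmemX b hb hbX
              subst hbx
              exact hxy ((hcf Y hY).2 hba haS.1)
            · have := hmin b ⟨hbfY, hbX⟩ hba
              exact hbY'.2 (le_of_eq this)
        · intro b hb
          rcases List.mem_cons.mp hb with h | h
          · exact h ▸ haY
          · exact (hmemY b h).1
        · intro b hb hbX
          rcases List.mem_cons.mp hb with h | h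
          · exact absurd (h ▸ hbX) haS.2
          · exact hmemX b h hbX

/-- On a finite poset, for any choice function satisfying outcast and any `x ∈ f X`,
there is an antichain sequence `A` compatible with `f` such that `x ∈ f_A X`. -/
theorem exists_antichain_sequence {P : Type*} [PartialOrder P] [Fintype P]
    (f : Set P → Set P) (hcf : IsCF f) (ho : Outcast f)
    (X : Set P) (hX : IsLowerSet X) (x : P) (hx : x ∈ f X) :
    ∃ A : List P, IsAntichainSeq A ∧ Compatible f A ∧ x ∈ elemCF A X := by
  obtain ⟨L, hrc, hanti, helem, _, _⟩ :=
    aux_exists f hcf ho X hX x hx (Set.univ : Set P).ncard Set.univ le_rfl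
      isLowerSet_univ (Set.subset_univ X)
  refine ⟨L, hanti, ?_, helem⟩
  intro i
  have h := rc_get f L Set.univ hrc i.1 i.2
  have hs : {y | y ∈ (Set.univ : Set P) ∧ ∀ j, ∀ hj : j < i.1,
        ¬ L.get ⟨j, Nat.lt_trans hj i.2⟩ ≤ y} =
      {y | ∀ j : Fin L.length, j.1 < i.1 → ¬ L.get j ≤ y} := by
    ext y
    constructor
    · rintro ⟨-, hall⟩ j hj
      have := hall j.1 hj
      simpa using this
    · intro hall
      exact ⟨trivial, fun j hj => hall ⟨j, Nat.lt_trans hj i.2⟩ hj⟩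
  rw [hs] at h
  simpa using h
end

section
/- Every conservative choice function f on a finite poset P equals the union of the elementary choice functions f_A over all antichain sequences A compatible with f; i.e., f(X) = ⋃ {f_A(X) : A an antichain sequence compatible with f} for every ideal X. -/
section Aux

variable {P : Type*} [PartialOrder P]

/-- Relative compatibility: `A` is compatible starting from the ideal `U`. -/
def RelComp (f : Set P → Set P) : Set P → List P → Prop
  | _, [] => True
  | U, a :: as => a ∈ f U ∧ RelComp f (U ∩ {y | ¬ a ≤ y}) as

lemma isLowerSet_notle (a : P) : IsLowerSet {y : P | ¬ a ≤ y} :=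
  fun _y _z hzy hy haz => hy (haz.trans hzy)

lemma relComp_mem (f : Set P → Set P) (hcf : IsCF f) :
    ∀ (A : List P) (U : Set P), IsLowerSet U → RelComp f U A → ∀ b ∈ A, b ∈ U := by
  intro A
  induction A with
  | nil => intro U _ _ b hb; exact absurd hb List.not_mem_nil
  | cons a as ih =>
    intro U hU h b hb
    rcases List.mem_cons.mp hb with rfl | hb'
    · exact (hcf U hU).1 h.1
    · exact (ih (U ∩ {y | ¬ a ≤ y}) (hU.inter (isLowerSet_notle a)) h.2 b hb').1

lemma relComp_compat (f : Set P → Set P) :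
    ∀ (A : List P) (U : Set P), RelComp f U A →
      ∀ i : Fin A.length,
        A.get i ∈ f (U ∩ {x | ∀ j : Fin A.length, j.1 < i.1 → ¬ A.get j ≤ x}) := by
  intro A
  induction A with
  | nil => intro U _ i; exact absurd i.2 (by simp)
  | cons a as ih =>
    intro U h i
    rcases i with ⟨iv, hi⟩
    cases iv with
    | zero =>
      have hset : U ∩ {x | ∀ j : Fin (a :: as).length, j.1 < (0 : ℕ) → ¬ (a :: as).get j ≤ x}
          = U := by
        ext x; simp
      rw [hset]
      exact h.1
    | succ n =>
      have hn : n < as.length := Nat.lt_of_succ_lt_succ hi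
      have hthis := ih (U ∩ {y | ¬ a ≤ y}) h.2 ⟨n, hn⟩
      have hset : (U ∩ {y | ¬ a ≤ y}) ∩ {x | ∀ j : Fin as.length, j.1 < n → ¬ as.get j ≤ x}
          = U ∩ {x | ∀ j : Fin (a :: as).length, j.1 < n + 1 → ¬ (a :: as).get j ≤ x} := by
        ext x
        constructor
        · rintro ⟨⟨hxU, hax⟩, hall⟩
          refine ⟨hxU, ?_⟩
          intro j hj
          rcases j with ⟨jv, hjv⟩
          cases jv with
          | zero => exact hax
          | succ m => exact hall ⟨m, Nat.lt_of_succ_lt_succ hjv⟩ (Nat.lt_of_succ_lt_succ hj)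
        · rintro ⟨hxU, hall⟩
          exact ⟨⟨hxU, hall ⟨0, Nat.succ_pos _⟩ (Nat.succ_pos n)⟩,
            fun j hj => hall ⟨j.1 + 1, Nat.succ_lt_succ j.2⟩ (Nat.succ_lt_succ hj)⟩
      rw [← hset]
      exact hthis

lemma elemCF_char (X : Set P) :
    ∀ (A : List P) (x : P), x ∈ elemCF A X →
      x ∈ X ∧ ∃ i : Fin A.length, x ≤ A.get i ∧
        ∀ j : Fin A.length, j.1 < i.1 → A.get j ∉ X := by
  intro A
  induction A with
  | nil => intro x hx; exact absurd hx (by simp [elemCF])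
  | cons a as ih =>
    intro x hx
    rcases hx with ⟨hxX, hxa⟩ | ⟨haX, hx'⟩
    · exact ⟨hxX, ⟨0, Nat.succ_pos _⟩, hxa, fun j hj => absurd hj (Nat.not_lt_zero _)⟩
    · obtain ⟨hxX, i, hle, hnot⟩ := ih x hx'
      refine ⟨hxX, ⟨i.1 + 1, Nat.succ_lt_succ i.2⟩, hle, ?_⟩
      intro j hj
      rcases j with ⟨jv, hjv⟩
      cases jv with
      | zero => exact haX
      | succ m => exact hnot ⟨m, Nat.lt_of_succ_lt_succ hjv⟩ (Nat.lt_of_succ_lt_succ hj)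

lemma build_seq {P : Type*} [PartialOrder P] [Fintype P]
    (f : Set P → Set P) (hcf : IsCF f) (_hh : Heredity f) (ho : Outcast f) :
    ∀ (n : ℕ) (U X : Set P) (x : P), U.ncard ≤ n → IsLowerSet U → IsLowerSet X → X ⊆ U →
      x ∈ f X →
      ∃ A : List P, RelComp f U A ∧ IsAntichainSeq A ∧
        (∀ b ∈ A, b = x ∨ b ∉ X) ∧ x ∈ elemCF A X := by
  intro n
  induction n with
  | zero =>
    intro U X x hcard hU hX hXU hx
    have hU0 : U.ncard = 0 := Nat.le_zero.mp hcard
    have hUe : U = ∅ := (Set.ncard_eq_zero (Set.toFinite U)).mp hU0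
    exact absurd (hXU ((hcf X hX).1 hx)) (by simp [hUe])
  | succ n ih =>
    intro U X x hcard hU hX hXU hx
    by_cases hxU : x ∈ f U
    · refine ⟨[x], ⟨hxU, trivial⟩, ?_, ?_, ?_⟩
      · simp [IsAntichainSeq]
      · intro b hb
        simp only [List.mem_singleton] at hb
        exact Or.inl hb
      · exact Or.inl ⟨(hcf X hX).1 hx, le_rfl⟩
    · have hnsub : ¬ f U ⊆ X := by
        intro hsub
        exact hxU (ho X U hX hU hsub hXU ▸ hx)
      obtain ⟨a1, ha1fU, ha1X⟩ := Set.not_subset.mp hnsub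
      have hfin : (f U \ X).Finite := Set.toFinite _
      obtain ⟨a0, ha0m, hmin⟩ := Finset.exists_minimal (s := hfin.toFinset)
        ⟨a1, hfin.mem_toFinset.mpr ⟨ha1fU, ha1X⟩⟩
      replace ha0m : a0 ∈ hfin.toFinset := ha0m
      rw [hfin.mem_toFinset] at ha0m
      obtain ⟨ha0fU, ha0X⟩ := ha0m
      have hminS : ∀ b ∈ f U \ X, ¬ b < a0 := by
        intro b hb
        exact fun hlt => lt_irrefl _ (lt_of_lt_of_le hlt (hmin (hfin.mem_toFinset.mpr hb) hlt.le))
      set U' := U ∩ {y | ¬ a0 ≤ y} with hU'def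
      have hU' : IsLowerSet U' := hU.inter (isLowerSet_notle a0)
      have hXU' : X ⊆ U' := fun y hy => ⟨hXU hy, fun h0 => ha0X (hX h0 hy)⟩
      have ha0U : a0 ∈ U := (hcf U hU).1 ha0fU
      have hcard' : U'.ncard ≤ n := by
        have hss : U' ⊂ U := (Set.ssubset_iff_of_subset Set.inter_subset_left).mpr
          ⟨a0, ha0U, fun h => h.2 le_rfl⟩
        have := Set.ncard_lt_ncard hss (Set.toFinite U)
        omega
      obtain ⟨A', hrel', hanti', hbX', hmem'⟩ := ih U' X x hcard' hU' hX hXU' hx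
      refine ⟨a0 :: A', ⟨ha0fU, hrel'⟩, ?_, ?_, Or.inr ⟨ha0X, hmem'⟩⟩
      · rw [IsAntichainSeq, List.pairwise_cons]
        refine ⟨?_, hanti'⟩
        intro b hb
        have hbU' : b ∈ U' := relComp_mem f hcf A' U' hU' hrel' b hb
        refine ⟨hbU'.2, ?_⟩
        intro hba
        have hbfU : b ∈ f U := (hcf U hU).2 hba ha0fU
        rcases hbX' b hb with rfl | hbX
        · exact hxU hbfU
        · have hne : b ≠ a0 := by
            intro h; subst h; exact hbU'.2 le_rfl
          exact hminS b ⟨hbfU, hbX⟩ (lt_of_le_of_ne hba hne)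
      · intro b hb
        rcases List.mem_cons.mp hb with rfl | hb'
        · exact Or.inr ha0X
        · exact hbX' b hb'

end Aux

/-- Main theorem (finite case): every conservative choice function on a finite poset
is the union of the elementary choice functions of antichain sequences compatible with it. -/
theorem conservative_eq_union_elemCF {P : Type*} [PartialOrder P] [Fintype P]
    (f : Set P → Set P) (hcf : IsCF f) (hh : Heredity f) (ho : Outcast f) :
    ∀ X : Set P, IsLowerSet X →
      f X = {x | ∃ A : List P, IsAntichainSeq A ∧ Compatible f A ∧ x ∈ elemCF A X} := by
  intro X hX
  ext x
  simp only [Set.mem_setOf_eq]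
  constructor
  · intro hx
    obtain ⟨A, hrel, hanti, _, hmem⟩ :=
      build_seq f hcf hh ho (Set.univ : Set P).ncard Set.univ X x le_rfl isLowerSet_univ hX
        (Set.subset_univ X) hx
    refine ⟨A, hanti, ?_, hmem⟩
    intro i
    have h := relComp_compat f A Set.univ hrel i
    rwa [Set.univ_inter] at h
  · rintro ⟨A, _, hcomp, hmem⟩
    obtain ⟨hxX, i, hle, hnot⟩ := elemCF_char X A x hmem
    set Ui : Set P := {y | ∀ j : Fin A.length, j.1 < i.1 → ¬ A.get j ≤ y} with hUi
    have hUiLower : IsLowerSet Ui := fun _b _c hcb hb j hj hle' => hb j hj (hle'.trans hcb)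
    have hXUi : X ⊆ Ui := fun y hy j hj hle' => hnot j hj (hX hle' hy)
    have hai : A.get i ∈ f Ui := hcomp i
    have hxfUi : x ∈ f Ui := (hcf Ui hUiLower).2 hle hai
    exact hh X Ui hX hUiLower hXUi ⟨hxfUi, hxX⟩
end

section
/- Let f = f_A and g = f_B be elementary choice functions on a poset P associated with antichain sequences A = (a_1,...,a_n) and B = (b_1,...,b_k), with g(X) ⊆ f(X) for all ideals X. If a_j = b_j for all j < i but a_i ≠ b_i and b_i exists, then b_i < a_i. -/
lemma mem_elemCF {P : Type*} [PartialOrder P] (L : List P) (X : Set P) (y : P) :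
    y ∈ elemCF L X ↔ ∃ n, ∃ h : n < L.length, y ∈ X ∧ y ≤ L[n] ∧ ∀ m (hm : m < n), L[m]'(hm.trans h) ∉ X := by
  induction L with
  | nil => simp [elemCF]
  | cons a as ih =>
    constructor
    · rintro (⟨hyX, hya⟩ | ⟨haX, hy⟩)
      · exact ⟨0, by simp, hyX, hya, by omega⟩
      · obtain ⟨n, hn, hyX, hyl, hall⟩ := ih.mp hy
        refine ⟨n+1, by simpa using hn, hyX, by simpa using hyl, ?_⟩
        intro m hm
        cases m with
        | zero => simpa using haX
        | succ m => simpa using hall m (by omega)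
    · rintro ⟨n, hn, hyX, hyl, hall⟩
      cases n with
      | zero => exact Or.inl ⟨hyX, by simpa using hyl⟩
      | succ n =>
        refine Or.inr ⟨by simpa using hall 0 (by omega), ih.mpr ⟨n, by simpa using hn, hyX, by simpa using hyl, ?_⟩⟩
        intro m hm
        simpa using hall (m+1) (by omega)

/-- Lemma 1: if `f_B ⊆ f_A` for antichain sequences `A`, `B` agreeing before index `i`,
and `a_i ≠ b_i` with `b_i` present, then `b_i < a_i`. -/
theorem elemCF_subset_lt {P : Type*} [PartialOrder P] (A B : List P)
    (hAanti : IsAntichainSeq A) (hBanti : IsAntichainSeq B)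
    (hsub : ∀ X : Set P, IsLowerSet X → elemCF B X ⊆ elemCF A X)
    (i : ℕ) (hiA : i < A.length) (hiB : i < B.length)
    (hagree : ∀ j (hj : j < i), A[j]'(hj.trans hiA) = B[j]'(hj.trans hiB))
    (hne : A[i]'hiA ≠ B[i]'hiB) :
    B[i]'hiB < A[i]'hiA := by

  -- X = complement of filter generated by a_1,...,a_{i-1}
  set X : Set P := {x | ∀ j (hj : j < i), ¬ A[j]'(hj.trans hiA) ≤ x} with hX
  have hXlow : IsLowerSet X := by
    intro x y hyx hxX j hj hle
    exact hxX j hj (hle.trans hyx)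
  have hApair : ∀ m (hm : m < i), ¬ A[m]'(hm.trans hiA) ≤ A[i] ∧ ¬ A[i]'hiA ≤ A[m]'(hm.trans hiA) := by
    intro m hm
    have := (List.pairwise_iff_get.mp hAanti) ⟨m, hm.trans hiA⟩ ⟨i, hiA⟩ hm
    simpa [List.get_eq_getElem] using this
  have hBpair : ∀ m (hm : m < i), ¬ B[m]'(hm.trans hiB) ≤ B[i] ∧ ¬ B[i]'hiB ≤ B[m]'(hm.trans hiB) := by
    intro m hm
    have := (List.pairwise_iff_get.mp hBanti) ⟨m, hm.trans hiB⟩ ⟨i, hiB⟩ hm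
    simpa [List.get_eq_getElem] using this
  have hBiX : B[i]'hiB ∈ X := by
    intro j hj hle
    rw [hagree j hj] at hle
    exact (hBpair j hj).1 hle
  have hBin : B[i]'hiB ∈ elemCF B X := by
    rw [mem_elemCF]
    refine ⟨i, hiB, hBiX, le_refl _, ?_⟩
    intro m hm hmem
    exact hmem m hm (by rw [hagree m hm])
  have hAin := hsub X hXlow hBin
  rw [mem_elemCF] at hAin
  obtain ⟨n, hn, hyX, hyl, hall⟩ := hAin
  have hni : n = i := by
    by_contra hne'
    rcases lt_or_gt_of_ne hne' with h | h
    · -- n < i : B[i] ≤ A[n] = B[n], contradicting B antichain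
      rw [hagree n h] at hyl
      exact (hBpair n h).2 hyl
    · -- n > i : A[i] ∈ X but should not be
      have : A[i]'hiA ∈ X := by
        intro j hj hle
        exact (hApair j hj).1 hle
      exact hall i h this
  subst hni
  exact hyl.lt_of_ne fun h => hne h.symm
end

section
/- Elementary choice functions associated with antichain sequences on a finite poset are join-irreducible: if f_A = g ∪ h where g and h are conservative choice functions, then g = f_A or h = f_A. -/
section Aux

variable {P : Type*} [PartialOrder P]

/-- Canonical lower set: complement of the filter generated by the first `k` terms. -/
def Xset (A : List P) (k : ℕ) : Set P :=
  {x | ∀ i : Fin A.length, i.1 < k → ¬ A.get i ≤ x}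

lemma Xset_lower (A : List P) (k : ℕ) : IsLowerSet (Xset A k) :=
  fun _x _y hyx hx i hik hle => hx i hik (hle.trans hyx)

lemma Xset_mono (A : List P) {k l : ℕ} (hkl : k ≤ l) : Xset A l ⊆ Xset A k :=
  fun _x hx i hik => hx i (lt_of_lt_of_le hik hkl)

lemma antichain_get {A : List P} (hA : IsAntichainSeq A) {i j : Fin A.length}
    (hij : i ≠ j) : ¬ A.get i ≤ A.get j := by
  rcases lt_or_gt_of_ne (Fin.val_ne_of_ne hij) with hlt | hlt
  · exact (List.pairwise_iff_get.mp hA i j hlt).1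
  · exact (List.pairwise_iff_get.mp hA j i hlt).2

lemma get_mem_Xset {A : List P} (hA : IsAntichainSeq A) (k : Fin A.length) :
    A.get k ∈ Xset A k.1 :=
  fun i hik => antichain_get hA (Fin.ne_of_val_ne (Nat.ne_of_lt hik))

lemma mem_elemCF_s13 (A : List P) (X : Set P) (y : P) :
    y ∈ elemCF A X ↔ y ∈ X ∧ ∃ j : Fin A.length, y ≤ A.get j ∧
      ∀ i : Fin A.length, i.1 < j.1 → A.get i ∉ X := by
  induction A with
  | nil => simp [elemCF]
  | cons a as ih =>
    show y ∈ (X ∩ {y | y ≤ a}) ∪ {y | a ∉ X ∧ y ∈ elemCF as X} ↔ _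
    simp only [Set.mem_union, Set.mem_inter_iff, Set.mem_setOf_eq, ih]
    constructor
    · rintro (⟨hyX, hya⟩ | ⟨haX, hyX, j, hle, hj⟩)
      · exact ⟨hyX, ⟨0, Nat.succ_pos _⟩, hya, fun i hi => absurd hi (Nat.not_lt_zero _)⟩
      · refine ⟨hyX, j.succ, hle, fun i hi => ?_⟩
        rcases i with ⟨iv, hiv⟩
        cases iv with
        | zero => exact haX
        | succ iv' =>
            exact hj ⟨iv', Nat.lt_of_succ_lt_succ hiv⟩ (Nat.lt_of_succ_lt_succ hi)
    · rintro ⟨hyX, ⟨jv, hjv⟩, hle, hj⟩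
      cases jv with
      | zero => exact Or.inl ⟨hyX, hle⟩
      | succ jv' =>
          refine Or.inr ⟨hj ⟨0, Nat.succ_pos _⟩ (Nat.succ_pos _), hyX,
            ⟨jv', Nat.lt_of_succ_lt_succ hjv⟩, hle, fun i hi => ?_⟩
          exact hj i.succ (Nat.succ_lt_succ hi)

/-- If some term of `A` lies in `elemCF A (Xset A k)`, it must be `A.get k`. -/
lemma get_mem_elemCF_Xset {A : List P} (hA : IsAntichainSeq A) (k i : Fin A.length)
    (hmem : A.get i ∈ elemCF A (Xset A k.1)) : i = k := by
  obtain ⟨hiX, j, hle, hj⟩ := (mem_elemCF_s13 A _ _).mp hmem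
  have hki : ¬ i.1 < k.1 := fun hik => hiX i hik le_rfl
  have hjk : ¬ k.1 < j.1 := fun hkj => hj k hkj (get_mem_Xset hA k)
  have hij : i = j := by
    by_contra hne
    exact antichain_get hA hne hle
  exact Fin.ext (le_antisymm (hij ▸ not_lt.mp hjk) (not_lt.mp hki))

lemma key_lemma {A : List P} (hA : IsAntichainSeq A) (g h : Set P → Set P)
    (hgcf : IsCF g) (hgo : Outcast g) (hhh : Heredity h)
    (hunion : ∀ X : Set P, IsLowerSet X → elemCF A X = g X ∪ h X)
    (k l : Fin A.length) (hkl : k.1 < l.1)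
    (hk : A.get k ∉ g (Xset A k.1)) (hl : A.get l ∉ h (Xset A l.1)) : False := by
  set Xk := Xset A k.1 with hXk
  set Xl := Xset A l.1 with hXl
  have hXkl : Xl ⊆ Xk := Xset_mono A (le_of_lt hkl)
  have hglow : IsLowerSet (g Xk) := (hgcf Xk (Xset_lower A k.1)).2
  have hgsub : g Xk ⊆ Xk := (hgcf Xk (Xset_lower A k.1)).1
  set S : Set P := g Xk ∪ Xl with hS
  have hSlow : IsLowerSet S := hglow.union (Xset_lower A l.1)
  have hSXk : S ⊆ Xk := Set.union_subset hgsub hXkl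
  have hgS : g S = g Xk :=
    hgo S Xk hSlow (Xset_lower A k.1) Set.subset_union_left hSXk
  -- `A.get l ∈ elemCF A S`
  have hnotS : ∀ i : Fin A.length, i.1 < l.1 → A.get i ∉ S := by
    rintro i hil (hig | hiX)
    · have hgfk : g Xk ⊆ elemCF A Xk := by
        rw [hunion Xk (Xset_lower A k.1)]; exact Set.subset_union_left
      have : i = k := get_mem_elemCF_Xset hA k i (hgfk hig)
      exact hk (this ▸ hig)
    · exact hiX i hil le_rfl
  have hlS : A.get l ∈ elemCF A S :=
    (mem_elemCF_s13 A S _).mpr ⟨Or.inr (get_mem_Xset hA l), l, le_rfl, hnotS⟩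
  have hlgh : A.get l ∈ g S ∪ h S := (hunion S hSlow) ▸ hlS
  have hlh : A.get l ∉ h S := fun hmem =>
    hl (hhh Xl S (Xset_lower A l.1) hSlow Set.subset_union_right
      ⟨hmem, get_mem_Xset hA l⟩)
  have hlg : A.get l ∈ g Xk := hgS ▸ hlgh.resolve_right hlh
  have hgfk : g Xk ⊆ elemCF A Xk := by
    rw [hunion Xk (Xset_lower A k.1)]; exact Set.subset_union_left
  have : l = k := get_mem_elemCF_Xset hA k l (hgfk hlg)
  exact absurd (this ▸ hkl) (lt_irrefl _)

lemma full_of_compat {A : List P} (g h : Set P → Set P)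
    (hgcf : IsCF g) (hgh : Heredity g)
    (hunion : ∀ X : Set P, IsLowerSet X → elemCF A X = g X ∪ h X)
    (hcompat : ∀ k : Fin A.length, A.get k ∈ g (Xset A k.1)) :
    ∀ X : Set P, IsLowerSet X → g X = elemCF A X := by
  intro X hX
  apply Set.Subset.antisymm
  · rw [hunion X hX]; exact Set.subset_union_left
  · intro y hy
    obtain ⟨hyX, j, hle, hj⟩ := (mem_elemCF_s13 A X y).mp hy
    have hXsub : X ⊆ Xset A j.1 := by
      intro x hx i hij hile
      exact hj i hij (hX hile hx)
    have hglow : IsLowerSet (g (Xset A j.1)) := (hgcf _ (Xset_lower A j.1)).2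
    have hyg : y ∈ g (Xset A j.1) := hglow hle (hcompat j)
    exact hgh X (Xset A j.1) hX (Xset_lower A j.1) hXsub ⟨hyg, hyX⟩

end Aux

/-- Elementary choice functions of antichain sequences on a finite poset are
join-irreducible among conservative choice functions. -/
theorem elemCF_join_irreducible {P : Type*} [PartialOrder P] [Fintype P]
    (A : List P) (hA : IsAntichainSeq A)
    (g h : Set P → Set P)
    (hgcf : IsCF g) (hgh : Heredity g) (hgo : Outcast g)
    (hhcf : IsCF h) (hhh : Heredity h) (hho : Outcast h)
    (hunion : ∀ X : Set P, IsLowerSet X → elemCF A X = g X ∪ h X) :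
    (∀ X : Set P, IsLowerSet X → g X = elemCF A X) ∨
      (∀ X : Set P, IsLowerSet X → h X = elemCF A X) := by
  have hunion' : ∀ X : Set P, IsLowerSet X → elemCF A X = h X ∪ g X := by
    intro X hX; rw [hunion X hX, Set.union_comm]
  by_cases hcg : ∀ k : Fin A.length, A.get k ∈ g (Xset A k.1)
  · exact Or.inl (full_of_compat g h hgcf hgh hunion hcg)
  · push_neg at hcg
    obtain ⟨k, hk⟩ := hcg
    have hch : ∀ l : Fin A.length, A.get l ∈ h (Xset A l.1) := by
      intro l
      by_contra hl
      rcases lt_trichotomy k.1 l.1 with hkl | hkl | hkl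
      · exact key_lemma hA g h hgcf hgo hhh hunion k l hkl hk hl
      · have : k = l := Fin.ext hkl
        have hmem : A.get k ∈ elemCF A (Xset A k.1) :=
          (mem_elemCF_s13 A _ _).mpr ⟨get_mem_Xset hA k, k, le_rfl,
            fun i hik => fun hmem' => hmem' i hik le_rfl⟩
        rcases (hunion _ (Xset_lower A k.1)) ▸ hmem with hmem | hmem
        · exact hk hmem
        · exact hl (this ▸ hmem)
      · exact key_lemma hA h g hhcf hho hgh hunion' l k hkl hl hk
    exact Or.inr (full_of_compat h g hhcf hhh hunion' hch)
end

section
/- For any well-ordered sequence A = (a_i)_{i∈I} of elements of a poset P (I a well-ordered index set), the associated elementary choice function f_A is conservative (satisfies heredity and outcast). -/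
/-- The elementary choice function of a well-ordered sequence `a : ι → P`:
`X ∩ I({a_j : j ⪯ i(X)})` where `i(X)` is the least index with `a_{i(X)} ∈ X`,
and `X ∩ I({a_j : j ∈ ι})` if no term of the sequence lies in `X`.
(Here `j ⪯ i(X)` is expressed by `∀ k < j, a k ∉ X`.) -/
def elemCFW {P : Type*} [PartialOrder P] {ι : Type*} [LinearOrder ι]
    (a : ι → P) (X : Set P) : Set P :=
  X ∩ {y | ∃ j : ι, (∀ k : ι, k < j → a k ∉ X) ∧ y ≤ a j}

/-- The well-ordered sequence `a` is compatible with `f`: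
`a i ∈ f (P − ⋃_{j ≺ i} F(a_j))` for every `i`. -/
def CompatibleW {P : Type*} [PartialOrder P] {ι : Type*} [LinearOrder ι]
    (f : Set P → Set P) (a : ι → P) : Prop :=
  ∀ i : ι, a i ∈ f {x | ∀ j : ι, j < i → ¬ a j ≤ x}

/-- The elementary choice function of any well-ordered sequence is conservative. -/
theorem elemCFW_conservative {P : Type*} [PartialOrder P] {ι : Type*} [LinearOrder ι]
    [WellFoundedLT ι] (a : ι → P) :
    Heredity (elemCFW a) ∧ Outcast (elemCFW a) := by
  constructor
  · rintro A B _ _ hAB y ⟨⟨hyB, j, hj, hle⟩, hyA⟩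
    exact ⟨hyA, j, fun k hk hkA => hj k hk (hAB hkA), hle⟩
  · intro A B _ _ hfB hAB
    have key : ∀ j : ι, (∀ k, k < j → a k ∉ A) ↔ (∀ k, k < j → a k ∉ B) := by
      intro j
      constructor
      · intro h k hk hkB
        obtain ⟨m, hmB, hmin⟩ := (wellFounded_lt (α := ι)).has_min {i | a i ∈ B} ⟨k, hkB⟩
        have hm : m < j := lt_of_le_of_lt (not_lt.mp (hmin k hkB)) hk
        exact h m hm (hfB ⟨hmB, m, fun l hl hlB => hmin l hlB hl, le_refl _⟩)
      · intro h k hk hkA; exact h k hk (hAB hkA)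
    ext y
    simp only [elemCFW, Set.mem_inter_iff, Set.mem_setOf_eq]
    constructor
    · rintro ⟨hyA, j, hj, hle⟩
      exact ⟨hAB hyA, j, (key j).mp hj, hle⟩
    · rintro ⟨hyB, j, hj, hle⟩
      exact ⟨hfB ⟨hyB, j, hj, hle⟩, j, (key j).mpr hj, hle⟩
end

section
/- If a well-ordered sequence A = (a_i)_{i∈I} in a poset P is compatible with a hereditary choice function f (i.e., a_i ∈ f(P − ⋃_{j≺i} F(a_j)) for all i ∈ I), then f_A(X) ⊆ f(X) for every ideal X. -/
/-- If a well-ordered sequence is compatible with a hereditary choice function `f`,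
then `f_A ⊆ f`. -/
theorem compatibleW_elemCFW_subset {P : Type*} [PartialOrder P] {ι : Type*}
    [LinearOrder ι] [WellFoundedLT ι] (f : Set P → Set P)
    (hcf : IsCF f) (hh : Heredity f) (a : ι → P) (ha : CompatibleW f a) :
    ∀ X : Set P, IsLowerSet X → elemCFW a X ⊆ f X := by
  intro X hX y hy
  obtain ⟨hyX, j, hj, hyj⟩ := hy
  set B : Set P := {x | ∀ k : ι, k < j → ¬ a k ≤ x} with hB
  have hBlower : IsLowerSet B := by
    intro u v huv hu k hk hak
    exact hu k hk (hak.trans huv)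
  have hXB : X ⊆ B := by
    intro x hx k hk hak
    exact hj k hk (hX hak hx)
  have hfB := hcf B hBlower
  have hyfB : y ∈ f B := hfB.2 hyj (ha j)
  exact hh X B hX hBlower hXB ⟨hyfB, hyX⟩
end

section
/- The linear order of any gallery is a well-order: if U ⊆ P with linear order ≺_U satisfies that every proper initial segment V of U equals [≺_U x] for x = p(F(V)), where p is a fixed selector, then (U, ≺_U) is well-ordered. -/
/-- The filter (upper set) generated by a subset. -/
def upClo {P : Type*} [PartialOrder P] (V : Set P) : Set P :=
  {x | ∃ v ∈ V, v ≤ x}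

/-- `(U, lt)` is a gallery for the selector `p` (and choice function `f`):
`lt` is a strict linear order on `U`, and every initial segment `V ≠ U` satisfies
`F(V) ∈ 𝓕` (i.e. `f (P − F(V)) ≠ ∅`), `x := p (F V) ∈ U` and `V = [lt x]`. -/
def GalleryOn {P : Type*} [PartialOrder P] (f : Set P → Set P) (p : Set P → P)
    (U : Set P) (lt : P → P → Prop) : Prop :=
  (∀ x ∈ U, ∀ y ∈ U, ∀ z ∈ U, lt x y → lt y z → lt x z) ∧
  (∀ x ∈ U, ¬ lt x x) ∧
  (∀ x ∈ U, ∀ y ∈ U, lt x y ∨ x = y ∨ lt y x) ∧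
  (∀ V ⊆ U, (∀ x ∈ V, ∀ y ∈ U, lt y x → y ∈ V) → V ≠ U →
    (f (Set.univ \ upClo V)).Nonempty ∧ p (upClo V) ∈ U ∧
      V = {y ∈ U | lt y (p (upClo V))})

/-- The order of any gallery is a well-order: every nonempty subset has a least element. -/
theorem gallery_wellOrdered {P : Type*} [PartialOrder P] (f : Set P → Set P)
    (p : Set P → P)
    (hp : ∀ F : Set P, IsUpperSet F → (f (Set.univ \ F)).Nonempty →
      p F ∈ f (Set.univ \ F))
    (U : Set P) (lt : P → P → Prop) (hU : GalleryOn f p U lt) :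
    ∀ S ⊆ U, S.Nonempty → ∃ m ∈ S, ∀ s ∈ S, s ≠ m → lt m s := by
  obtain ⟨htr, hirr, htot, hseg⟩ := hU
  intro S hSU hS
  set V : Set P := {y ∈ U | ∀ s ∈ S, lt y s} with hVdef
  have hVU : V ⊆ U := fun y hy => hy.1
  have hinit : ∀ x ∈ V, ∀ y ∈ U, lt y x → y ∈ V := by
    intro x hx y hyU hyx
    exact ⟨hyU, fun s hs => htr y hyU x hx.1 s (hSU hs) hyx (hx.2 s hs)⟩
  have hSV : ∀ s ∈ S, s ∉ V := fun s hs hsV => hirr s (hSU hs) (hsV.2 s hs)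
  have hne : V ≠ U := by
    obtain ⟨s, hs⟩ := hS
    intro h
    exact hSV s hs (h ▸ hSU hs)
  obtain ⟨-, hxU, hVx⟩ := hseg V hVU hinit hne
  set x := p (upClo V) with hxdef
  have hxV : x ∉ V := fun h => hirr x hxU (hVx ▸ h).2
  have hlow : ∀ s ∈ S, s ≠ x → lt x s := by
    intro s hs hne'
    rcases htot x hxU s (hSU hs) with h | h | h
    · exact h
    · exact absurd h.symm hne'
    · exact absurd (hVx ▸ (hSV s hs)) (fun hn => hn ⟨hSU hs, h⟩)
  have hxS : x ∈ S := by
    by_contra hxS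
    exact hxV ⟨hxU, fun s hs => hlow s hs (fun h => hxS (h ▸ hs))⟩
  exact ⟨x, hxS, hlow⟩
end

section
/- Any two galleries (with respect to a fixed selector p) are comparable: one of them is a continuation of the other, i.e., one is an initial segment of the other with the same induced order. -/
/-- Gallery `U'` continues gallery `U`: `U ⊆ U'`, the orders coincide on `U`,
and `U` is an initial segment of `U'`. -/
def Continues {P : Type*} [PartialOrder P] (U' U : Set P)
    (lt' lt : P → P → Prop) : Prop :=
  U ⊆ U' ∧ (∀ x ∈ U, ∀ y ∈ U, (lt x y ↔ lt' x y)) ∧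
    (∀ x ∈ U, ∀ y ∈ U', lt' y x → y ∈ U)

/-- Lemma 2: any two galleries (for the same selector) are comparable. -/
theorem galleries_comparable {P : Type*} [PartialOrder P] (f : Set P → Set P)
    (p : Set P → P)
    (hp : ∀ F : Set P, IsUpperSet F → (f (Set.univ \ F)).Nonempty →
      p F ∈ f (Set.univ \ F))
    (U V : Set P) (ltU ltV : P → P → Prop)
    (hU : GalleryOn f p U ltU) (hV : GalleryOn f p V ltV) :
    Continues U V ltU ltV ∨ Continues V U ltV ltU := by
  classical
  obtain ⟨hUt, hUi, hUl, hUs⟩ := hU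
  obtain ⟨hVt, hVi, hVl, hVs⟩ := hV
  set S : Set (Set P) := {A | A ⊆ U ∧ A ⊆ V ∧
    (∀ x ∈ A, ∀ y ∈ U, ltU y x → y ∈ A) ∧
    (∀ x ∈ A, ∀ y ∈ V, ltV y x → y ∈ A) ∧
    (∀ x ∈ A, ∀ y ∈ A, (ltU x y ↔ ltV x y))} with hSdef
  -- any two members of S are comparable
  have hcomp : ∀ A ∈ S, ∀ B ∈ S, A ⊆ B ∨ B ⊆ A := by
    intro A hA B hB
    by_cases h : A ⊆ B
    · exact Or.inl h
    · right
      obtain ⟨a, haA, haB⟩ := Set.not_subset.mp h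
      intro b hbB
      rcases hUl a (hA.1 haA) b (hB.1 hbB) with h1 | h1 | h1
      · exact absurd (hB.2.2.1 b hbB a (hA.1 haA) h1) haB
      · exact absurd (h1 ▸ hbB) haB
      · exact hA.2.2.1 a haA b (hB.1 hbB) h1
  set W : Set P := ⋃₀ S with hWdef
  have hWS : W ∈ S := by
    refine ⟨?_, ?_, ?_, ?_, ?_⟩
    · exact Set.sUnion_subset fun A hA => hA.1
    · exact Set.sUnion_subset fun A hA => hA.2.1
    · rintro x ⟨A, hA, hxA⟩ y hyU hyx
      exact ⟨A, hA, hA.2.2.1 x hxA y hyU hyx⟩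
    · rintro x ⟨A, hA, hxA⟩ y hyV hyx
      exact ⟨A, hA, hA.2.2.2.1 x hxA y hyV hyx⟩
    · rintro x ⟨A, hA, hxA⟩ y ⟨B, hB, hyB⟩
      rcases hcomp A hA B hB with h | h
      · exact hB.2.2.2.2 x (h hxA) y hyB
      · exact hA.2.2.2.2 x hxA y (h hyB)
  have key : W = U ∨ W = V := by
    by_contra h
    push_neg at h
    obtain ⟨hne1, hne2⟩ := h
    obtain ⟨_, hxU, hWeqU⟩ := hUs W hWS.1 hWS.2.2.1 hne1
    obtain ⟨_, hxV, hWeqV⟩ := hVs W hWS.2.1 hWS.2.2.2.1 hne2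
    set x := p (upClo W) with hxdef
    have hxnW : x ∉ W := by
      intro hxW
      have := hWeqU ▸ hxW
      exact hUi x hxU this.2
    have hltUW : ∀ y ∈ W, ltU y x := fun y hy => (hWeqU ▸ hy).2
    have hltVW : ∀ y ∈ W, ltV y x := fun y hy => (hWeqV ▸ hy).2
    have hnotU : ∀ z ∈ W, ¬ ltU x z := by
      intro z hz hxz
      exact hUi x hxU (hUt x hxU z (hWS.1 hz) x hxU hxz (hltUW z hz))
    have hnotV : ∀ z ∈ W, ¬ ltV x z := by
      intro z hz hxz
      exact hVi x hxV (hVt x hxV z (hWS.2.1 hz) x hxV hxz (hltVW z hz))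
    have hins : insert x W ∈ S := by
      refine ⟨?_, ?_, ?_, ?_, ?_⟩
      · rintro y (rfl | hy)
        · exact hxU
        · exact hWS.1 hy
      · rintro y (rfl | hy)
        · exact hxV
        · exact hWS.2.1 hy
      · rintro z (rfl | hz) y hyU hyz
        · exact Or.inr ((hWeqU ▸ Set.mem_setOf_eq ▸ ⟨hyU, hyz⟩ : y ∈ W))
        · exact Or.inr (hWS.2.2.1 z hz y hyU hyz)
      · rintro z (rfl | hz) y hyV hyz
        · exact Or.inr ((hWeqV ▸ Set.mem_setOf_eq ▸ ⟨hyV, hyz⟩ : y ∈ W))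
        · exact Or.inr (hWS.2.2.2.1 z hz y hyV hyz)
      · rintro y (rfl | hy) z (rfl | hz)
        · exact ⟨fun h => absurd h (hUi x hxU), fun h => absurd h (hVi x hxV)⟩
        · exact ⟨fun h => absurd h (hnotU z hz), fun h => absurd h (hnotV z hz)⟩
        · exact ⟨fun _ => hltVW y hy, fun _ => hltUW y hy⟩
        · exact hWS.2.2.2.2 y hy z hz
    exact hxnW ⟨insert x W, hins, Set.mem_insert x W⟩
  rcases key with hW | hW
  · right
    refine ⟨hW ▸ hWS.2.1, fun a ha b hb => ?_, fun a ha b hb => ?_⟩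
    · exact hWS.2.2.2.2 a (hW ▸ ha) b (hW ▸ hb)
    · exact hW ▸ hWS.2.2.2.1 a (hW ▸ ha) b hb
  · left
    refine ⟨hW ▸ hWS.1, fun a ha b hb => ?_, fun a ha b hb => ?_⟩
    · exact (hWS.2.2.2.2 a (hW ▸ ha) b (hW ▸ hb)).symm
    · exact hW ▸ hWS.2.2.1 a (hW ▸ ha) b hb
end

section
/- Let f be a conservative choice function on a poset P, X an ideal, and x ∈ f(X). Then there exists a through gallery U (considered as a well-ordered sequence compatible with f) such that x ∈ f_U(X). Consequently, every conservative choice function on an arbitrary poset is the union of elementary choice functions associated with well-ordered sequences compatible with f. -/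
/-- `(U, lt)` is a well-ordered subset of `P`. -/
def IsWellOrderOn {P : Type*} [PartialOrder P] (U : Set P) (lt : P → P → Prop) : Prop :=
  (∀ x ∈ U, ∀ y ∈ U, ∀ z ∈ U, lt x y → lt y z → lt x z) ∧
  (∀ x ∈ U, ¬ lt x x) ∧
  (∀ x ∈ U, ∀ y ∈ U, lt x y ∨ x = y ∨ lt y x) ∧
  (∀ S ⊆ U, S.Nonempty → ∃ m ∈ S, ∀ s ∈ S, s ≠ m → lt m s)

/-- The well-ordered subset `(U, lt)` is compatible with `f`. -/
def SubsetCompatible {P : Type*} [PartialOrder P] (f : Set P → Set P)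
    (U : Set P) (lt : P → P → Prop) : Prop :=
  ∀ u ∈ U, u ∈ f {x | ∀ v ∈ U, lt v u → ¬ v ≤ x}

/-- The elementary choice function of the well-ordered subset `(U, lt)`:
`X ∩ I({u ∈ U : u ⪯ u₀})` where `u₀` is the least element of `U ∩ X`
(and `X ∩ I(U)` if `U ∩ X = ∅`). -/
def elemCFSub {P : Type*} [PartialOrder P] (U : Set P) (lt : P → P → Prop)
    (X : Set P) : Set P :=
  X ∩ {y | ∃ u ∈ U, (∀ v ∈ U, lt v u → v ∉ X) ∧ y ≤ u}

/-! ### Auxiliary material -/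

universe u

section Aux

variable {P : Type u} [PartialOrder P]

attribute [local instance] Classical.propDecidable

theorem mem_upClo_self {V : Set P} {v : P} (h : v ∈ V) : v ∈ upClo V := ⟨v, h, le_rfl⟩

theorem upClo_mono {V W : Set P} (h : V ⊆ W) : upClo V ⊆ upClo W :=
  fun _z ⟨v, hv, hle⟩ => ⟨v, h hv, hle⟩

theorem lower_diff_upClo (V : Set P) : IsLowerSet (Set.univ \ upClo V) := by
  intro a b hba ha
  refine ⟨trivial, ?_⟩
  rintro ⟨v, hv, hle⟩
  exact ha.2 ⟨v, hv, hle.trans hba⟩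

/-- The selector used in the proof: choose `x` if possible, otherwise prefer an
element outside `X`, otherwise an arbitrary element of `f (univ \ F)`. -/
noncomputable def galSel (f : Set P → Set P) (X : Set P) (x : P) (F : Set P) : P :=
  if x ∈ f (Set.univ \ F) then x
  else if h : ∃ u, u ∈ f (Set.univ \ F) ∧ u ∉ X then h.choose
  else if h2 : (f (Set.univ \ F)).Nonempty then h2.choose else x

theorem galSel_mem (f : Set P → Set P) (X : Set P) (x : P) (F : Set P)
    (hne : (f (Set.univ \ F)).Nonempty) : galSel f X x F ∈ f (Set.univ \ F) := by
  unfold galSel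
  by_cases h1 : x ∈ f (Set.univ \ F)
  · rw [if_pos h1]; exact h1
  · rw [if_neg h1]
    by_cases h2 : ∃ u, u ∈ f (Set.univ \ F) ∧ u ∉ X
    · rw [dif_pos h2]; exact h2.choose_spec.1
    · rw [dif_neg h2, dif_pos hne]; exact hne.choose_spec

theorem galSel_eq_x (f : Set P → Set P) (X : Set P) {x : P} {F : Set P}
    (h : x ∈ f (Set.univ \ F)) : galSel f X x F = x := by
  unfold galSel
  rw [if_pos h]

theorem galSel_not_mem_X (f : Set P → Set P) (X : Set P) (x : P) {F : Set P}
    (h1 : x ∉ f (Set.univ \ F)) (h2 : ∃ u, u ∈ f (Set.univ \ F) ∧ u ∉ X) :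
    galSel f X x F ∉ X := by
  unfold galSel
  rw [if_neg h1, dif_pos h2]
  exact h2.choose_spec.2

/-- Transfinite iteration of the selector `p`. -/
noncomputable def gal (p : Set P → P) (o : Ordinal.{u}) : P :=
  p (upClo (Set.range fun i : Set.Iio o => gal p i.1))
termination_by o
decreasing_by exact i.2

theorem gal_eq (p : Set P → P) (o : Ordinal.{u}) :
    gal p o = p (upClo (gal p '' Set.Iio o)) := by
  rw [gal]
  congr 1
  rw [Set.image_eq_range]

theorem mem_of_elemCFSub {f : Set P → Set P} (hcf : IsCF f)
    (hh : Heredity f) {X : Set P} (hX : IsLowerSet X) {U : Set P} {lt : P → P → Prop}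
    (hcomp : SubsetCompatible f U lt) {x : P} (hmem : x ∈ elemCFSub U lt X) : x ∈ f X := by
  obtain ⟨hxX, u, huU, hprev, hxu⟩ := hmem
  have hYlow : IsLowerSet {z | ∀ v ∈ U, lt v u → ¬ v ≤ z} := by
    intro a b hba ha v hv hl hle
    exact ha v hv hl (hle.trans hba)
  have hu : u ∈ f {z | ∀ v ∈ U, lt v u → ¬ v ≤ z} := hcomp u huU
  have huY : u ∈ {z | ∀ v ∈ U, lt v u → ¬ v ≤ z} := (hcf _ hYlow).1 hu
  have hAlow : IsLowerSet (X ∪ {z | z ≤ u}) := by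
    rintro a b hba (ha | ha)
    · exact Or.inl (hX hba ha)
    · exact Or.inr (hba.trans ha)
  have hAY : X ∪ {z | z ≤ u} ⊆ {z | ∀ v ∈ U, lt v u → ¬ v ≤ z} := by
    rintro z (hz | hz) v hv hl hle
    · exact hprev v hv hl (hX hle hz)
    · exact huY v hv hl (hle.trans hz)
  have huA : u ∈ f (X ∪ {z | z ≤ u}) :=
    hh _ _ hAlow hYlow hAY ⟨hu, Or.inr le_rfl⟩
  have hxA : x ∈ f (X ∪ {z | z ≤ u}) := (hcf _ hAlow).2 hxu huA
  exact hh X _ hX hAlow Set.subset_union_left ⟨hxA, hxX⟩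

theorem gallery_exists (f : Set P → Set P)
    (hcf : IsCF f) (ho : Outcast f)
    (X : Set P) (hX : IsLowerSet X) (x : P) (hx : x ∈ f X) :
    ∃ p : Set P → P,
      (∀ F : Set P, IsUpperSet F → (f (Set.univ \ F)).Nonempty →
        p F ∈ f (Set.univ \ F)) ∧
      ∃ (U : Set P) (lt : P → P → Prop),
        GalleryOn f p U lt ∧ f (Set.univ \ upClo U) = ∅ ∧
        IsWellOrderOn U lt ∧ SubsetCompatible f U lt ∧ x ∈ elemCFSub U lt X := by
  classical
  set p : Set P → P := galSel f X x with hp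
  refine ⟨p, fun F _ hne => galSel_mem f X x F hne, ?_⟩
  set g : Ordinal.{u} → P := gal p with hg
  set Y : Ordinal.{u} → Set P := fun o => Set.univ \ upClo (g '' Set.Iio o) with hYdef
  have hgo : ∀ o, g o = p (upClo (g '' Set.Iio o)) := fun o => gal_eq p o
  have hYlow : ∀ o, IsLowerSet (Y o) := fun _ => lower_diff_upClo _
  have hmem : ∀ o, (f (Y o)).Nonempty → g o ∈ f (Y o) := by
    intro o h
    rw [hgo o]
    exact galSel_mem f X x _ h
  have hDne : ({o : Ordinal.{u} | f (Y o) = ∅}).Nonempty := by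
    by_contra hno
    rw [Set.not_nonempty_iff_eq_empty, Set.eq_empty_iff_forall_notMem] at hno
    have hinj : Function.Injective g := by
      have key : ∀ {o₁ o₂ : Ordinal.{u}}, o₁ < o₂ → g o₁ ≠ g o₂ := by
        intro o₁ o₂ h12 heq
        have h2 : g o₂ ∈ Y o₂ := (hcf (Y o₂) (hYlow o₂)).1
          (hmem o₂ (Set.nonempty_iff_ne_empty.2 (hno o₂)))
        exact h2.2 (heq ▸ mem_upClo_self ⟨o₁, h12, rfl⟩)
      intro o₁ o₂ heq
      rcases lt_trichotomy o₁ o₂ with h | h | h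
      · exact absurd heq (key h)
      · exact h
      · exact absurd heq.symm (key h)
    exact not_injective_of_ordinal g hinj
  set κ : Ordinal.{u} := Ordinal.lt_wf.min {o : Ordinal.{u} | f (Y o) = ∅} hDne with hκdef
  have hκdead : f (Y κ) = ∅ := Ordinal.lt_wf.min_mem _ hDne
  have hlive : ∀ o < κ, (f (Y o)).Nonempty := by
    intro o hoκ
    rcases Set.eq_empty_or_nonempty (f (Y o)) with h | h
    · exact absurd hoκ (Ordinal.lt_wf.not_lt_min _ h)
    · exact h
  have hginY : ∀ o < κ, g o ∈ f (Y o) := fun o h => hmem o (hlive o h)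
  have hinjκ : ∀ o₁ < κ, ∀ o₂ < κ, g o₁ = g o₂ → o₁ = o₂ := by
    have key : ∀ o₁ o₂, o₂ < κ → o₁ < o₂ → g o₁ ≠ g o₂ := by
      intro o₁ o₂ h2κ h12 heq
      have h2 : g o₂ ∈ Y o₂ := (hcf (Y o₂) (hYlow o₂)).1 (hginY o₂ h2κ)
      exact h2.2 (heq ▸ mem_upClo_self ⟨o₁, h12, rfl⟩)
    intro o₁ h1 o₂ h2 heq
    rcases lt_trichotomy o₁ o₂ with h | h | h
    · exact absurd heq (key _ _ h2 h)
    · exact h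
    · exact absurd heq.symm (key _ _ h1 h)
  set U : Set P := g '' Set.Iio κ with hU
  set lt : P → P → Prop :=
    fun a b => ∃ o₁, o₁ < κ ∧ ∃ o₂, o₂ < κ ∧ o₁ < o₂ ∧ g o₁ = a ∧ g o₂ = b with hltdef
  have hlt_intro : ∀ {o₁}, o₁ < κ → ∀ {o₂}, o₂ < κ → o₁ < o₂ → lt (g o₁) (g o₂) := by
    intro o₁ h1 o₂ h2 h
    exact ⟨o₁, h1, o₂, h2, h, rfl, rfl⟩
  have hlt_elim : ∀ {o₁}, o₁ < κ → ∀ {o₂}, o₂ < κ → lt (g o₁) (g o₂) → o₁ < o₂ := by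
    intro o₁ h1 o₂ h2 hl
    obtain ⟨a₁, ha₁, a₂, ha₂, hlt', e₁, e₂⟩ := hl
    rw [hinjκ a₁ ha₁ o₁ h1 e₁, hinjκ a₂ ha₂ o₂ h2 e₂] at hlt'
    exact hlt'
  have hUmem : ∀ {o}, o < κ → g o ∈ U := fun {o} h => ⟨o, h, rfl⟩
  have hbelow : ∀ {o : Ordinal.{u}}, o < κ → {y ∈ U | lt y (g o)} = g '' Set.Iio o := by
    intro o hoκ
    ext y
    constructor
    · rintro ⟨⟨o', ho', rfl⟩, hlt'⟩
      exact ⟨o', hlt_elim ho' hoκ hlt', rfl⟩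
    · rintro ⟨o', ho', rfl⟩
      exact ⟨hUmem (ho'.trans hoκ), hlt_intro (ho'.trans hoκ) hoκ ho'⟩
  have htrans : ∀ a ∈ U, ∀ b ∈ U, ∀ c ∈ U, lt a b → lt b c → lt a c := by
    rintro a ⟨o₁, h1, rfl⟩ b ⟨o₂, h2, rfl⟩ c ⟨o₃, h3, rfl⟩ hab hbc
    exact hlt_intro h1 h3 ((hlt_elim h1 h2 hab).trans (hlt_elim h2 h3 hbc))
  have hirr : ∀ a ∈ U, ¬ lt a a := by
    rintro a ⟨o, h, rfl⟩ hlt'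
    exact lt_irrefl o (hlt_elim h h hlt')
  have htotal : ∀ a ∈ U, ∀ b ∈ U, lt a b ∨ a = b ∨ lt b a := by
    rintro a ⟨o₁, h1, rfl⟩ b ⟨o₂, h2, rfl⟩
    rcases lt_trichotomy o₁ o₂ with h | h | h
    · exact Or.inl (hlt_intro h1 h2 h)
    · exact Or.inr (Or.inl (by rw [h]))
    · exact Or.inr (Or.inr (hlt_intro h2 h1 h))
  have hleast : ∀ S ⊆ U, S.Nonempty → ∃ m ∈ S, ∀ s ∈ S, s ≠ m → lt m s := by
    intro S hSU hSne
    have hT : ({o : Ordinal.{u} | o < κ ∧ g o ∈ S}).Nonempty := by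
      obtain ⟨s, hs⟩ := hSne
      obtain ⟨o, ho, rfl⟩ := hSU hs
      exact ⟨o, ho, hs⟩
    obtain ⟨m₀, ⟨hm₀κ, hm₀S⟩, hm₀min⟩ :
        ∃ m₀, (m₀ < κ ∧ g m₀ ∈ S) ∧ ∀ o', (o' < κ ∧ g o' ∈ S) → ¬ o' < m₀ :=
      ⟨_, Ordinal.lt_wf.min_mem _ hT, fun o' h => Ordinal.lt_wf.not_lt_min _ h⟩
    refine ⟨g m₀, hm₀S, ?_⟩
    intro s hs hne
    obtain ⟨o', ho', rfl⟩ := hSU hs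
    have hne' : o' ≠ m₀ := fun h => hne (by rw [h])
    have hnlt : ¬ o' < m₀ := hm₀min o' ⟨ho', hs⟩
    exact hlt_intro hm₀κ ho' (lt_of_le_of_ne (not_lt.1 hnlt) (Ne.symm hne'))
  have hgal4 : ∀ V ⊆ U, (∀ a ∈ V, ∀ b ∈ U, lt b a → b ∈ V) → V ≠ U →
      (f (Set.univ \ upClo V)).Nonempty ∧ p (upClo V) ∈ U ∧
        V = {y ∈ U | lt y (p (upClo V))} := by
    intro V hVU hVdc hVne
    have hS : ({o : Ordinal.{u} | o < κ ∧ g o ∉ V}).Nonempty := by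
      obtain ⟨u', huU, huV⟩ := Set.exists_of_ssubset (ssubset_of_subset_of_ne hVU hVne)
      obtain ⟨o, ho, rfl⟩ := huU
      exact ⟨o, ho, huV⟩
    obtain ⟨o₀, ⟨ho₀κ, ho₀V⟩, ho₀min⟩ :
        ∃ o₀, (o₀ < κ ∧ g o₀ ∉ V) ∧ ∀ o', (o' < κ ∧ g o' ∉ V) → ¬ o' < o₀ :=
      ⟨_, Ordinal.lt_wf.min_mem _ hS, fun o' h => Ordinal.lt_wf.not_lt_min _ h⟩
    have hVeq : V = g '' Set.Iio o₀ := by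
      apply Set.Subset.antisymm
      · intro v hv
        obtain ⟨o', ho', rfl⟩ := hVU hv
        rcases lt_trichotomy o' o₀ with h | h | h
        · exact ⟨o', h, rfl⟩
        · exact absurd (h ▸ hv) ho₀V
        · exact absurd (hVdc _ hv _ (hUmem ho₀κ) (hlt_intro ho₀κ ho' h)) ho₀V
      · rintro v ⟨o', ho', rfl⟩
        by_contra hvV
        exact ho₀min o' ⟨ho'.trans ho₀κ, hvV⟩ ho'
    have hpV : p (upClo V) = g o₀ := by rw [hVeq]; exact (hgo o₀).symm
    refine ⟨?_, ?_, ?_⟩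
    · rw [hVeq]; exact hlive o₀ ho₀κ
    · rw [hpV]; exact hUmem ho₀κ
    · rw [hpV, hbelow ho₀κ]; exact hVeq
  have hcompat : SubsetCompatible f U lt := by
    rintro u' ⟨o, hoκ, rfl⟩
    have hset : {z | ∀ v ∈ U, lt v (g o) → ¬ v ≤ z} = Y o := by
      ext z
      constructor
      · intro hz
        refine ⟨trivial, ?_⟩
        rintro ⟨v, ⟨o', ho', rfl⟩, hvz⟩
        exact hz (g o') (hUmem (ho'.trans hoκ)) (hlt_intro (ho'.trans hoκ) hoκ ho') hvz
      · rintro ⟨-, hz⟩ v hvU hlv hvz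
        obtain ⟨o', ho'κ, rfl⟩ := hvU
        exact hz ⟨g o', ⟨o', hlt_elim ho'κ hoκ hlv, rfl⟩, hvz⟩
    rw [hset]
    exact hginY o hoκ
  have hthrough : f (Set.univ \ upClo U) = ∅ := hκdead
  have hXsub : ∀ o, (∀ o' < o, g o' ∉ X) → X ⊆ Y o := by
    intro o h z hz
    refine ⟨trivial, ?_⟩
    rintro ⟨v, ⟨o', ho', rfl⟩, hvz⟩
    exact h o' ho' (hX hvz hz)
  have hC : ∀ o < κ, (∀ o' < o, g o' ∉ X) → g o ∉ X ∨ g o = x := by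
    intro o hoκ h
    by_cases hxY : x ∈ f (Y o)
    · right
      rw [hgo o]
      exact galSel_eq_x f X hxY
    · left
      have hex : ∃ u', u' ∈ f (Y o) ∧ u' ∉ X := by
        by_contra hno
        push_neg at hno
        have heq : f X = f (Y o) := ho X (Y o) hX (hYlow o) hno (hXsub o h)
        exact hxY (heq ▸ hx)
      rw [hgo o]
      exact galSel_not_mem_X f X x hxY hex
  have hfound : ({o : Ordinal.{u} | o < κ ∧ g o = x}).Nonempty := by
    by_contra hno
    rw [Set.not_nonempty_iff_eq_empty, Set.eq_empty_iff_forall_notMem] at hno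
    have hall : ∀ o, o < κ → g o ∉ X := by
      intro o
      induction o using Ordinal.induction with
      | h o IH =>
        intro hoκ
        rcases hC o hoκ (fun o' ho' => IH o' ho' (ho'.trans hoκ)) with h | h
        · exact h
        · exact absurd ⟨hoκ, h⟩ (hno o)
    have hXY : X ⊆ Y κ := hXsub κ (fun o' ho' => hall o' ho')
    have heq : f X = f (Y κ) :=
      ho X (Y κ) hX (hYlow κ) (hκdead.symm ▸ Set.empty_subset X) hXY
    rw [heq, hκdead] at hx
    exact absurd hx (Set.notMem_empty x)
  obtain ⟨o₁, ⟨ho₁κ, ho₁x⟩, ho₁min⟩ :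
      ∃ o₁, (o₁ < κ ∧ g o₁ = x) ∧ ∀ o', (o' < κ ∧ g o' = x) → ¬ o' < o₁ :=
    ⟨_, Ordinal.lt_wf.min_mem _ hfound, fun o' h => Ordinal.lt_wf.not_lt_min _ h⟩
  have hprev : ∀ o' < o₁, g o' ∉ X := by
    intro o'
    induction o' using Ordinal.induction with
    | h o' IH =>
      intro ho'
      rcases hC o' (ho'.trans ho₁κ) (fun o'' ho'' => IH o'' ho'' (ho''.trans ho')) with h | h
      · exact h
      · exact absurd ho' (ho₁min o' ⟨ho'.trans ho₁κ, h⟩)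
  refine ⟨U, lt, ⟨htrans, hirr, htotal, hgal4⟩, hthrough,
    ⟨htrans, hirr, htotal, hleast⟩, hcompat, ?_⟩
  refine ⟨(hcf X hX).1 hx, x, ho₁x ▸ hUmem ho₁κ, ?_, le_rfl⟩
  intro v hvU hlv
  obtain ⟨o', ho'κ, rfl⟩ := hvU
  rw [← ho₁x] at hlv
  exact hprev o' (hlt_elim ho'κ ho₁κ hlv)

end Aux

/-- Main theorem (general case): for `x ∈ f X` there is a through gallery `U`
(a well-ordered sequence compatible with `f`) with `x ∈ f_U X`; consequently,
every conservative choice function is the union of the elementary choice functions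
of well-ordered sequences compatible with it. -/
theorem conservative_through_gallery {P : Type*} [PartialOrder P] (f : Set P → Set P)
    (hcf : IsCF f) (hh : Heredity f) (ho : Outcast f)
    (X : Set P) (hX : IsLowerSet X) :
    (∀ x ∈ f X,
      ∃ p : Set P → P,
        (∀ F : Set P, IsUpperSet F → (f (Set.univ \ F)).Nonempty →
          p F ∈ f (Set.univ \ F)) ∧
        ∃ (U : Set P) (lt : P → P → Prop),
          GalleryOn f p U lt ∧ f (Set.univ \ upClo U) = ∅ ∧
          IsWellOrderOn U lt ∧ SubsetCompatible f U lt ∧ x ∈ elemCFSub U lt X) ∧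
    f X = {x | ∃ (U : Set P) (lt : P → P → Prop),
      IsWellOrderOn U lt ∧ SubsetCompatible f U lt ∧ x ∈ elemCFSub U lt X} := by
  constructor
  · intro x hx
    exact gallery_exists f hcf ho X hX x hx
  · apply Set.Subset.antisymm
    · intro x hx
      obtain ⟨p, _hp, U, lt, _hgal, _hthr, hwo, hcomp, hmem⟩ :=
        gallery_exists f hcf ho X hX x hx
      exact ⟨U, lt, hwo, hcomp, hmem⟩
    · rintro x ⟨U, lt, _hwo, hcomp, hmem⟩
      exact mem_of_elemCFSub hcf hh hX hcomp hmem
end
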